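/- Let A ⊂ ℤ\{0} be a finite symmetric set, and let K > 0 satisfy 1̂_A(x) + K ≥ 0 for all x ∈ 𝕋. Then every subset B ⊆ A of size |B| ≥ 2K² satisfies #{(b₁, b₂) ∈ B × B : b₁ − b₂ ∈ A} ≥ |B|²/(2K). -/

import Mathlib

/-- `e(x) = e^{2πix}`. -/
noncomputable def eC (x : ℝ) : ℂ := Complex.exp (2 * Real.pi * Complex.I * x)

/-- `1̂_A(x) = ∑_{a ∈ A} e(ax)`. -/
noncomputable def fhat (A : Finset ℤ) (x : ℝ) : ℂ := ∑ a ∈ A, eC ((a : ℝ) * x)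

open intervalIntegral MeasureTheory in
lemma orth (n : ℤ) : (∫ x in (0:ℝ)..1, eC ((n:ℝ) * x)) = if n = 0 then 1 else 0 := by
  have heq : ∀ x : ℝ, eC ((n:ℝ) * x) = Complex.exp ((2 * Real.pi * Complex.I * n) * x) := by
    intro x; unfold eC; push_cast; ring_nf
  simp_rw [heq]
  rcases eq_or_ne n 0 with h | h
  · simp [h]
  · rw [if_neg h, integral_exp_mul_complex]
    · push_cast
      rw [mul_one, mul_zero, show (2 * (Real.pi:ℂ) * Complex.I * (n:ℂ)) = (n:ℂ) * (2 * Real.pi * Complex.I) by ring,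
        Complex.exp_int_mul_two_pi_mul_I]
      simp
    · simp [Complex.ext_iff, Real.pi_ne_zero, h]

lemma cont_eC (n : ℤ) : Continuous fun x : ℝ => eC ((n:ℝ) * x) := by
  unfold eC; fun_prop

lemma cont_fhat (A : Finset ℤ) : Continuous (fhat A) :=
  continuous_finset_sum _ fun a _ => cont_eC a

lemma conj_eC (y : ℝ) : (starRingEnd ℂ) (eC y) = eC (-y) := by
  unfold eC
  rw [← Complex.exp_conj]
  congr 1
  simp [Complex.ext_iff]

lemma eC_add (y z : ℝ) : eC (y + z) = eC y * eC z := by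
  unfold eC
  rw [← Complex.exp_add]
  push_cast
  ring_nf

lemma fhat_conj (A : Finset ℤ) (hsym : ∀ a : ℤ, a ∈ A ↔ -a ∈ A) (x : ℝ) :
    (starRingEnd ℂ) (fhat A x) = fhat A x := by
  unfold fhat
  rw [map_sum]
  simp_rw [conj_eC]
  refine Finset.sum_equiv (Equiv.neg ℤ) (fun a => hsym a) (fun a _ => ?_)
  simp only [Equiv.neg_apply]
  push_cast
  ring_nf

lemma fhat_im (A : Finset ℤ) (hsym : ∀ a : ℤ, a ∈ A ↔ -a ∈ A) (x : ℝ) :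
    (fhat A x).im = 0 := by
  have h := fhat_conj A hsym x
  have := congrArg Complex.im h
  simp at this
  linarith

open intervalIntegral MeasureTheory in
lemma int_re (F : ℝ → ℂ) (h : IntervalIntegrable F volume 0 1) :
    (∫ x in (0:ℝ)..1, (F x).re) = (∫ x in (0:ℝ)..1, F x).re := by
  rw [intervalIntegral.integral_of_le zero_le_one, intervalIntegral.integral_of_le zero_le_one]
  exact integral_re ((intervalIntegrable_iff_integrableOn_Ioc_of_le zero_le_one).mp h)

lemma conj_fhat (B : Finset ℤ) (x : ℝ) :
    (starRingEnd ℂ) (fhat B x) = ∑ b ∈ B, eC (((-b : ℤ) : ℝ) * x) := by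
  unfold fhat
  rw [map_sum]
  refine Finset.sum_congr rfl fun b _ => ?_
  rw [conj_eC]
  push_cast
  ring_nf

lemma sum_eC_mul {α β : Type*} (s : Finset α) (t : Finset β) (f : α → ℤ) (g : β → ℤ) (x : ℝ) :
    (∑ i ∈ s, eC ((f i : ℝ) * x)) * (∑ j ∈ t, eC ((g j : ℝ) * x)) =
      ∑ p ∈ s ×ˢ t, eC (((f p.1 + g p.2 : ℤ) : ℝ) * x) := by
  rw [Finset.sum_mul_sum, Finset.sum_product]
  refine Finset.sum_congr rfl fun i _ => Finset.sum_congr rfl fun j _ => ?_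
  rw [← eC_add]
  push_cast
  ring_nf

open intervalIntegral MeasureTheory in
lemma int_sum {α : Type*} (s : Finset α) (g : α → ℤ) :
    (∫ x in (0:ℝ)..1, ∑ i ∈ s, eC ((g i : ℝ) * x)) =
      ∑ i ∈ s, (if g i = 0 then (1:ℂ) else 0) := by
  rw [intervalIntegral.integral_finset_sum (fun i _ => (cont_eC (g i)).intervalIntegrable _ _)]
  exact Finset.sum_congr rfl fun i _ => orth (g i)

/-- Roth's lemma: if `1̂_A + K ≥ 0` then every `B ⊆ A` with `|B| ≥ 2K²` has many
pairs with difference in `A`. -/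
theorem roth_energy (A : Finset ℤ) (h0 : (0 : ℤ) ∉ A) (hsym : ∀ a : ℤ, a ∈ A ↔ -a ∈ A)
    (K : ℝ) (hK : 0 < K) (hmin : ∀ x : ℝ, 0 ≤ (fhat A x).re + K) :
    ∀ B ⊆ A, 2 * K ^ 2 ≤ (B.card : ℝ) →
      (B.card : ℝ) ^ 2 / (2 * K) ≤
        (((B ×ˢ B).filter (fun p : ℤ × ℤ => p.1 - p.2 ∈ A)).card : ℝ) := by
  intro B hB hcard
  set n : ℝ := (B.card : ℝ) with hn
  set E : ℝ := (((B ×ˢ B).filter (fun p : ℤ × ℤ => p.1 - p.2 ∈ A)).card : ℝ) with hE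
  have hn0 : 0 ≤ n := Nat.cast_nonneg _
  have hcB : Continuous (fhat B) := cont_fhat B
  have hcA : Continuous (fhat A) := cont_fhat A
  -- complex integral computations
  have IB : (∫ x in (0:ℝ)..1, fhat B x * (fhat A x + K)) = (B.card : ℂ) := by
    have expand : ∀ x : ℝ, fhat B x * (fhat A x + K) =
        (∑ p ∈ B ×ˢ A, eC (((p.1 + p.2 : ℤ) : ℝ) * x)) + K * ∑ b ∈ B, eC ((b : ℝ) * x) := by
      intro x
      rw [mul_add]
      congr 1
      · exact sum_eC_mul B A id id x
      · unfold fhat; ring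
    simp_rw [expand]
    rw [intervalIntegral.integral_add (f := fun x => ∑ p ∈ B ×ˢ A, eC (((p.1 + p.2 : ℤ) : ℝ) * x))
        (g := fun x => (K:ℂ) * ∑ b ∈ B, eC ((b : ℝ) * x))
        ((continuous_finset_sum _ fun p _ => cont_eC _).intervalIntegrable _ _)
        ((continuous_const.mul (continuous_finset_sum _ fun b _ => cont_eC _)).intervalIntegrable _ _),
      intervalIntegral.integral_const_mul, int_sum, int_sum]
    have e1 : (∑ p ∈ B ×ˢ A, if p.1 + p.2 = 0 then (1:ℂ) else 0) = (B.card : ℂ) := by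
      rw [Finset.sum_product]
      have : ∀ b ∈ B, (∑ a ∈ A, if b + a = 0 then (1:ℂ) else 0) = 1 := by
        intro b hb
        have : ∀ a ∈ A, (if b + a = 0 then (1:ℂ) else 0) = (if a = -b then (1:ℂ) else 0) := by
          intro a _; exact if_congr (by omega) rfl rfl
        rw [Finset.sum_congr rfl this, Finset.sum_ite_eq' A (-b) (fun _ => (1:ℂ)),
          if_pos ((hsym b).mp (hB hb))]
      rw [Finset.sum_congr rfl this]
      simp
    have e2 : (∑ b ∈ B, if b = 0 then (1:ℂ) else 0) = 0 := by
      rw [Finset.sum_ite_eq' B 0 (fun _ => (1:ℂ)), if_neg (fun h => h0 (hB h))]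
    rw [e1, e2, mul_zero, add_zero]
  have IA : (∫ x in (0:ℝ)..1, (fhat A x + K)) = (K : ℂ) := by
    rw [intervalIntegral.integral_add (hcA.intervalIntegrable _ _)
        (intervalIntegrable_const)]
    have : (∫ x in (0:ℝ)..1, fhat A x) = 0 := by
      unfold fhat
      rw [int_sum A (fun a => a)]
      rw [Finset.sum_ite_eq' A 0 (fun _ => (1:ℂ)), if_neg h0]
    rw [this, intervalIntegral.integral_const]
    simp
  have IC : (∫ x in (0:ℝ)..1, (fhat B x * (starRingEnd ℂ) (fhat B x)) * (fhat A x + K))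
      = (E : ℂ) + K * (B.card : ℂ) := by
    have hZ : ∀ x : ℝ, fhat B x * (starRingEnd ℂ) (fhat B x) =
        ∑ p ∈ B ×ˢ B, eC (((p.1 + -p.2 : ℤ) : ℝ) * x) := by
      intro x
      rw [conj_fhat]
      exact sum_eC_mul B B id (fun b => -b) x
    have expand : ∀ x : ℝ, (fhat B x * (starRingEnd ℂ) (fhat B x)) * (fhat A x + K) =
        (∑ q ∈ (B ×ˢ B) ×ˢ A, eC ((((q.1.1 + -q.1.2) + q.2 : ℤ) : ℝ) * x))
          + K * ∑ p ∈ B ×ˢ B, eC (((p.1 + -p.2 : ℤ) : ℝ) * x) := by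
      intro x
      rw [hZ, mul_add]
      congr 1
      · exact sum_eC_mul (B ×ˢ B) A (fun p => p.1 + -p.2) id x
      · ring
    simp_rw [expand]
    rw [intervalIntegral.integral_add
        (f := fun x => ∑ q ∈ (B ×ˢ B) ×ˢ A, eC ((((q.1.1 + -q.1.2) + q.2 : ℤ) : ℝ) * x))
        (g := fun x => (K:ℂ) * ∑ p ∈ B ×ˢ B, eC (((p.1 + -p.2 : ℤ) : ℝ) * x))
        ((continuous_finset_sum _ fun p _ => cont_eC _).intervalIntegrable _ _)
        ((continuous_const.mul (continuous_finset_sum _ fun b _ => cont_eC _)).intervalIntegrable _ _),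
      intervalIntegral.integral_const_mul, int_sum, int_sum]
    have e1 : (∑ q ∈ (B ×ˢ B) ×ˢ A, if (q.1.1 + -q.1.2) + q.2 = 0 then (1:ℂ) else 0) = (E : ℂ) := by
      rw [Finset.sum_product]
      have : ∀ p ∈ B ×ˢ B, (∑ a ∈ A, if (p.1 + -p.2) + a = 0 then (1:ℂ) else 0)
          = if p.1 - p.2 ∈ A then (1:ℂ) else 0 := by
        intro p _
        have h1 : ∀ a ∈ A, (if (p.1 + -p.2) + a = 0 then (1:ℂ) else 0)
            = (if a = p.2 - p.1 then (1:ℂ) else 0) := by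
          intro a _; exact if_congr (by omega) rfl rfl
        rw [Finset.sum_congr rfl h1, Finset.sum_ite_eq' A (p.2 - p.1) (fun _ => (1:ℂ))]
        refine if_congr ?_ rfl rfl
        rw [hsym (p.2 - p.1), show -(p.2 - p.1) = p.1 - p.2 by ring]
      rw [Finset.sum_congr rfl this, Finset.sum_boole, hE]
      norm_cast
    have e2 : (∑ p ∈ B ×ˢ B, if p.1 + -p.2 = 0 then (1:ℂ) else 0) = (B.card : ℂ) := by
      rw [Finset.sum_product]
      have : ∀ b ∈ B, (∑ b2 ∈ B, if b + -b2 = 0 then (1:ℂ) else 0) = 1 := by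
        intro b hb
        have : ∀ b2 ∈ B, (if b + -b2 = 0 then (1:ℂ) else 0) = (if b2 = b then (1:ℂ) else 0) := by
          intro b2 _; exact if_congr (by omega) rfl rfl
        rw [Finset.sum_congr rfl this, Finset.sum_ite_eq' B b (fun _ => (1:ℂ)), if_pos hb]
      rw [Finset.sum_congr rfl this]
      simp
    rw [e1, e2]
  -- pointwise inequality and integration
  set c : ℝ := n / K with hc
  have hc0 : 0 ≤ c := div_nonneg hn0 hK.le
  have hptwise : ∀ x ∈ Set.Icc (0:ℝ) 1,
      (2*c*(fhat B x).re - c^2) * ((fhat A x).re + K)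
        ≤ ‖fhat B x‖^2 * ((fhat A x).re + K) := by
    intro x _
    have h1 : 2*c*(fhat B x).re - c^2 ≤ ‖fhat B x‖^2 := by
      nlinarith [Complex.re_le_norm (fhat B x), sq_nonneg (‖fhat B x‖ - c),
        norm_nonneg (fhat B x)]
    exact mul_le_mul_of_nonneg_right h1 (hmin x)
  have hcf : Continuous fun x : ℝ => (2*c*(fhat B x).re - c^2) * ((fhat A x).re + K) := by
    fun_prop
  have hcg : Continuous fun x : ℝ => ‖fhat B x‖^2 * ((fhat A x).re + K) :=
    ((continuous_norm.comp hcB).pow 2).mul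
      ((Complex.continuous_re.comp hcA).add continuous_const)
  have hmono := intervalIntegral.integral_mono_on (μ := MeasureTheory.volume) zero_le_one
    (hcf.intervalIntegrable 0 1) (hcg.intervalIntegrable 0 1) hptwise
  -- identify LHS
  have lhs_eq : (∫ x in (0:ℝ)..1, (2*c*(fhat B x).re - c^2) * ((fhat A x).re + K))
      = 2*c*n - c^2*K := by
    have hpt : ∀ x : ℝ, (2*c*(fhat B x).re - c^2) * ((fhat A x).re + K)
        = ((((2*c : ℝ) : ℂ)*fhat B x - ((c^2 : ℝ) : ℂ)) * (fhat A x + K)).re := by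
      intro x
      have him := fhat_im A hsym x
      simp only [Complex.mul_re, Complex.sub_re, Complex.sub_im, Complex.mul_im,
        Complex.add_re, Complex.add_im, Complex.ofReal_re, Complex.ofReal_im, him]
      ring
    simp_rw [hpt]
    rw [int_re (fun x => ((((2*c : ℝ) : ℂ))*fhat B x - ((c^2 : ℝ) : ℂ)) * (fhat A x + K))
      (((continuous_const.mul hcB).sub continuous_const).mul
      (hcA.add continuous_const) |>.intervalIntegrable 0 1)]
    have hsplit : ∀ x : ℝ, ((((2*c : ℝ) : ℂ))*fhat B x - ((c^2 : ℝ) : ℂ)) * (fhat A x + K)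
        = (((2*c : ℝ) : ℂ)) * (fhat B x * (fhat A x + K)) - ((c^2 : ℝ) : ℂ) * (fhat A x + K) := by
      intro x; ring
    simp_rw [hsplit]
    rw [intervalIntegral.integral_sub
        (f := fun x => (((2*c : ℝ) : ℂ)) * (fhat B x * (fhat A x + K)))
        (g := fun x => ((c^2 : ℝ) : ℂ) * (fhat A x + K))
        ((continuous_const.mul (hcB.mul (hcA.add continuous_const))).intervalIntegrable _ _)
        ((continuous_const.mul (hcA.add continuous_const)).intervalIntegrable _ _),
      intervalIntegral.integral_const_mul, intervalIntegral.integral_const_mul, IB, IA]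
    rw [show (((2*c : ℝ) : ℂ))*(B.card:ℂ) - ((c^2 : ℝ) : ℂ)*(K:ℂ) = ((2*c*n - c^2*K : ℝ) : ℂ) by
      push_cast [hn]; ring]
    rw [Complex.ofReal_re]
  -- identify RHS
  have rhs_eq : (∫ x in (0:ℝ)..1, ‖fhat B x‖^2 * ((fhat A x).re + K))
      = E + K*n := by
    have hpt : ∀ x : ℝ, ‖fhat B x‖^2 * ((fhat A x).re + K)
        = ((fhat B x * (starRingEnd ℂ) (fhat B x)) * (fhat A x + K)).re := by
      intro x
      have him := fhat_im A hsym x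
      rw [Complex.mul_conj]
      simp only [Complex.mul_re, Complex.ofReal_re, Complex.ofReal_im, Complex.add_re,
        Complex.add_im, him, Complex.normSq_eq_norm_sq]
      ring
    simp_rw [hpt]
    rw [int_re (fun x => (fhat B x * (starRingEnd ℂ) (fhat B x)) * (fhat A x + K))
      (((hcB.mul (show Continuous fun x => (starRingEnd ℂ) (fhat B x) from
      Complex.continuous_conj.comp hcB)).mul
      (hcA.add continuous_const)).intervalIntegrable 0 1)]
    rw [IC]
    rw [show (E:ℂ) + (K:ℂ)*(B.card:ℂ) = ((E + K*n : ℝ) : ℂ) by push_cast [hn]; ring]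
    rw [Complex.ofReal_re]
  rw [lhs_eq, rhs_eq] at hmono
  -- final arithmetic
  have hcK : c * K = n := div_mul_cancel₀ n hK.ne'
  rw [div_le_iff₀ (by positivity)]
  nlinarith [hmono, hcard, hn0, hK, mul_le_mul_of_nonneg_right hcard hn0]
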